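/- Let ℓ ≥ 1 and 1 ≤ k ≤ ℓ be integers, let α = (α_1, …, α_k), β = (β_1, …, β_k) be nonzero complex numbers with ρ_i = β_i/α_i, and let r = (r_1, …, r_k) be pairwise distinct complex numbers. Define the k×k complex matrix B by B_{ij} = (α_i + r_j·β_i)^{ℓ-1}. Then det(B) = (-1)^{k(k-1)/2} · ∏_{i=1}^{k} β_i^{ℓ-1} · ∑_{0 ≤ μ_1 < … < μ_k ≤ ℓ-1} (∏_{j=1}^{k} C(ℓ-1, μ_j)) · V_{k,μ}(r_1, …, r_k) · V_{k,μ^∁}(1/ρ_1, …, 1/ρ_k), where for μ = (μ_1, …, μ_k) the complementary sequence is μ^∁ = (ℓ-1-μ_k, …, ℓ-1-μ_1). -/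

import Mathlib

open scoped Classical

/-- The generalized Vandermonde determinant `V_{k,μ}(ν) = det(ν_i^{μ_j})`. -/
noncomputable def genVandermonde (k : ℕ) (μ : Fin k → ℕ) (ν : Fin k → ℂ) : ℂ :=
  (Matrix.of fun i j : Fin k => ν i ^ μ j).det


open Finset Equiv Matrix


private def midEquiv (n : ℕ) : Fin n ≃ {x : Fin (n+2) // x ≠ 0 ∧ x ≠ Fin.last (n+1)} where
  toFun x := ⟨⟨x.val + 1, by have := x.isLt; omega⟩, by
    constructor
    · intro h; simpa [Fin.ext_iff] using h
    · intro h; rw [Fin.ext_iff] at h; simp [Fin.last] at h; have := x.isLt; omega⟩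
  invFun y := ⟨y.val.val - 1, by
    have h1 : (y.val : ℕ) ≠ 0 := fun h => y.2.1 (Fin.ext (by simpa using h))
    have h2 : (y.val : ℕ) ≠ n+1 := fun h => y.2.2 (Fin.ext (by simpa [Fin.last] using h))
    have := y.val.isLt; omega⟩
  left_inv x := by simp
  right_inv y := by
    have h1 : (y.val : ℕ) ≠ 0 := fun h => y.2.1 (Fin.ext (by simpa using h))
    ext
    simp [Fin.ext_iff]
    omega

private lemma rev_decomp (n : ℕ) :
    (Fin.revPerm : Perm (Fin (n+2))) =
      Equiv.swap 0 (Fin.last (n+1)) *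
        ((Fin.revPerm : Perm (Fin n)).extendDomain (midEquiv n)) := by
  ext i
  rcases eq_or_ne i 0 with rfl | h0
  · rw [Perm.mul_apply, Perm.extendDomain_apply_not_subtype]
    · simp [Equiv.swap_apply_left, Fin.rev_zero]
    · simp
  rcases eq_or_ne i (Fin.last (n+1)) with rfl | hl
  · rw [Perm.mul_apply, Perm.extendDomain_apply_not_subtype]
    · simp [Equiv.swap_apply_right]
    · simp
  · have hv0 : (i : ℕ) ≠ 0 := fun h => h0 (Fin.ext (by simpa using h))
    have hvl : (i : ℕ) ≠ n+1 := fun h => hl (Fin.ext (by simpa [Fin.last] using h))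
    have hlt := i.isLt
    set x : Fin n := ⟨(i : ℕ) - 1, by omega⟩ with hx
    have hfx : ((midEquiv n) x : Fin (n+2)) = i := by
      ext; simp [midEquiv, hx]; omega
    have key : ((Fin.revPerm : Perm (Fin n)).extendDomain (midEquiv n)) i
        = ((midEquiv n) (Fin.revPerm x) : Fin (n+2)) := by
      rw [← hfx]; exact Perm.extendDomain_apply_image _ _ _
    have hval : (((midEquiv n) (Fin.revPerm x) : Fin (n+2)) : ℕ) = n + 1 - (i : ℕ) := by
      simp [midEquiv, Fin.val_rev, hx]
      omega
    rw [Perm.mul_apply, key, Equiv.swap_apply_of_ne_of_ne]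
    · rw [hval]
      simp [Fin.val_rev]
    · intro h; rw [Fin.ext_iff, hval] at h; simp at h; omega
    · intro h; rw [Fin.ext_iff, hval] at h; simp [Fin.last] at h; omega

private lemma tri_step (m : ℕ) : (m+3)*(m+2)/2 = (m+1)*m/2 + (2*(m+1)+1) := by
  have h : (m+3)*(m+2) = (m+1)*m + 2*(2*(m+1)+1) := by ring
  rw [h, Nat.add_mul_div_left _ _ (by norm_num : 0 < (2:ℕ))]

private lemma sign_revPerm : ∀ n, Equiv.Perm.sign (Fin.revPerm : Perm (Fin n)) = (-1) ^ (n * (n-1) / 2)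
  | 0 => by decide
  | 1 => by decide
  | (n+2) => by
    rw [rev_decomp n, Equiv.Perm.sign_mul, Equiv.Perm.sign_swap (by simp [Fin.ext_iff]),
      Equiv.Perm.sign_extendDomain, sign_revPerm n]
    have he : (n+2) * (n+2-1) / 2 = n * (n-1)/2 + (2*n+1) := by
      rcases n with _ | m
      · rfl
      · have := tri_step m
        simpa [Nat.succ_sub_one] using this
    rw [he, pow_add]
    have : ((-1 : ℤˣ)) ^ (2*n+1) = -1 := Odd.neg_one_pow ⟨n, by ring⟩
    rw [this, mul_comm]


private lemma cauchyBinet {k ℓ : ℕ} (A : Matrix (Fin k) (Fin ℓ) ℂ) (V : Matrix (Fin ℓ) (Fin k) ℂ) :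
    (A * V).det = ∑ μ ∈ Finset.univ.filter (fun μ : Fin k → Fin ℓ => StrictMono μ),
      (A.submatrix id μ).det * (V.submatrix μ id).det := by
  have step1 : (A * V).det
      = ∑ f : Fin k → Fin ℓ, (∏ i, A i (f i)) * (V.submatrix f id).det := by
    have h1 : ((A * V) : Matrix (Fin k) (Fin k) ℂ)
        = fun i => ∑ m : Fin ℓ, A i m • V m := by
      funext i j
      simp [Matrix.mul_apply, Finset.sum_apply]
    calc (A * V).det = Matrix.detRowAlternating (fun i => ∑ m : Fin ℓ, A i m • V m) := by
          rw [show (A*V).det = Matrix.detRowAlternating (A*V) from rfl, h1]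
      _ = ∑ f : Fin k → Fin ℓ, Matrix.detRowAlternating (fun i => A i (f i) • V (f i)) :=
          (Matrix.detRowAlternating (R := ℂ) (n := Fin k)).toMultilinearMap.map_sum
            (g := fun i m => A i m • V m)
      _ = ∑ f : Fin k → Fin ℓ, (∏ i, A i (f i)) * (V.submatrix f id).det := by
          refine Finset.sum_congr rfl fun f _ => ?_
          have := (Matrix.detRowAlternating (R := ℂ) (n := Fin k)).toMultilinearMap.map_smul_univ
            (fun i => A i (f i)) (fun i => V (f i))
          simp only [smul_eq_mul] at this
          exact this
  rw [step1, ← Finset.sum_filter_add_sum_filter_not Finset.univ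
    (fun f : Fin k → Fin ℓ => Function.Injective f)]
  have step2 : ∑ f ∈ Finset.univ.filter (fun f : Fin k → Fin ℓ => ¬ Function.Injective f),
      (∏ i, A i (f i)) * (V.submatrix f id).det = 0 := by
    refine Finset.sum_eq_zero fun f hf => ?_
    simp only [Finset.mem_filter, Finset.mem_univ, true_and] at hf
    rw [Function.not_injective_iff] at hf
    obtain ⟨a, b, hab, hne⟩ := hf
    rw [Matrix.det_zero_of_row_eq hne (show (V.submatrix f id) a = (V.submatrix f id) b by
      funext j; simp [Matrix.submatrix_apply, hab]), mul_zero]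
  rw [step2, add_zero]
  have step3 : ∑ f ∈ Finset.univ.filter (fun f : Fin k → Fin ℓ => Function.Injective f),
      (∏ i, A i (f i)) * (V.submatrix f id).det
      = ∑ p ∈ (Finset.univ.filter (fun μ : Fin k → Fin ℓ => StrictMono μ))
            ×ˢ (Finset.univ : Finset (Perm (Fin k))),
          (∏ i, A i (p.1 (p.2 i))) * (V.submatrix (p.1 ∘ ⇑p.2) id).det := by
    refine (Finset.sum_bij (fun (p : (Fin k → Fin ℓ) × Perm (Fin k)) _ => p.1 ∘ ⇑p.2) ?_ ?_ ?_ ?_).symm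
    · rintro ⟨μ, σ⟩ hp
      simp only [Finset.mem_product, Finset.mem_filter, Finset.mem_univ, true_and, and_true] at hp
      simp only [Finset.mem_filter, Finset.mem_univ, true_and]
      exact hp.injective.comp σ.injective
    · rintro ⟨μ₁, σ₁⟩ hp₁ ⟨μ₂, σ₂⟩ hp₂ h
      simp only [Finset.mem_product, Finset.mem_filter, Finset.mem_univ, true_and, and_true] at hp₁ hp₂
      replace h : μ₁ ∘ ⇑σ₁ = μ₂ ∘ ⇑σ₂ := h
      have hrange : Set.range μ₁ = Set.range μ₂ := by
        rw [← σ₁.surjective.range_comp μ₁, ← σ₂.surjective.range_comp μ₂, h]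
      have hμ : μ₁ = μ₂ := (hp₁.range_inj hp₂).mp hrange
      subst hμ
      have hσ : σ₁ = σ₂ := by
        ext i
        have := hp₁.injective (congrFun h i)
        exact congrArg Fin.val this
      simp [hσ]
    · intro f hf
      simp only [Finset.mem_filter, Finset.mem_univ, true_and] at hf
      set s : Finset (Fin ℓ) := Finset.image f Finset.univ with hs
      have hcard : s.card = k := by
        rw [hs, Finset.card_image_of_injective _ hf, Finset.card_univ, Fintype.card_fin]
      set μ : Fin k → Fin ℓ := fun j => (s.orderIsoOfFin hcard j : Fin ℓ) with hμdef
      have hmono : StrictMono μ := fun a b hab => (s.orderIsoOfFin hcard).strictMono hab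
      have hmem : ∀ i, f i ∈ s := fun i => Finset.mem_image_of_mem f (Finset.mem_univ i)
      set g : Fin k → Fin k := fun i => (s.orderIsoOfFin hcard).symm ⟨f i, hmem i⟩ with hg
      have hginj : Function.Injective g := by
        intro a b hab
        apply hf
        have := congrArg (fun z => ((s.orderIsoOfFin hcard) z : Fin ℓ)) hab
        simpa [hg] using this
      have hgbij : Function.Bijective g := (Finite.injective_iff_bijective).mp hginj
      refine ⟨⟨μ, Equiv.ofBijective g hgbij⟩, ?_, ?_⟩
      · simp only [Finset.mem_product, Finset.mem_filter, Finset.mem_univ, true_and]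
        exact ⟨hmono, trivial⟩
      · funext i
        have h2 : (s.orderIsoOfFin hcard) (g i) = ⟨f i, hmem i⟩ :=
          (s.orderIsoOfFin hcard).apply_symm_apply _
        show ((s.orderIsoOfFin hcard) (g i) : Fin ℓ) = f i
        rw [h2]
    · rintro ⟨μ, σ⟩ hp
      rfl
  rw [step3, Finset.sum_product]
  refine Finset.sum_congr rfl fun μ hμ => ?_
  simp only [Finset.mem_filter, Finset.mem_univ, true_and] at hμ
  have hdet : ∀ σ : Perm (Fin k),
      (V.submatrix (μ ∘ ⇑σ) id).det = (Equiv.Perm.sign σ : ℂ) * (V.submatrix μ id).det := by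
    intro σ
    have h : V.submatrix (μ ∘ ⇑σ) id = (V.submatrix μ id).submatrix (⇑σ) id := by
      ext i j; simp
    rw [h, Matrix.det_permute]
  have hA : (A.submatrix id μ).det
      = ∑ σ : Perm (Fin k), (Equiv.Perm.sign σ : ℂ) * ∏ i, A i (μ (σ i)) := by
    rw [← Matrix.det_transpose, show (A.submatrix id μ)ᵀ = (Aᵀ).submatrix μ id from rfl,
      Matrix.det_apply']
    rfl
  rw [hA, Finset.sum_mul]
  refine Finset.sum_congr rfl fun σ _ => ?_
  rw [hdet σ]
  ring

theorem det_matB_formula' (ℓ k : ℕ) (hℓ : 1 ≤ ℓ) (hk1 : 1 ≤ k) (hk : k ≤ ℓ)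
    (α β : Fin k → ℂ) (hα : ∀ i, α i ≠ 0) (hβ : ∀ i, β i ≠ 0)
    (r : Fin k → ℂ) (hinj : Function.Injective r) :
    (Matrix.of fun i j : Fin k => (α i + r j * β i) ^ (ℓ - 1)).det =
      (-1 : ℂ) ^ (k * (k - 1) / 2) * (∏ i : Fin k, β i ^ (ℓ - 1)) *
        ∑ μ ∈ Finset.univ.filter (fun μ : Fin k → Fin ℓ => StrictMono μ),
          (∏ j : Fin k, ((ℓ - 1).choose (μ j : ℕ) : ℂ)) *
            genVandermonde k (fun j => (μ j : ℕ)) r *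
              genVandermonde k (fun j => ℓ - 1 - (μ j.rev : ℕ))
                (fun i => (β i / α i)⁻¹) := by
  set A : Matrix (Fin k) (Fin ℓ) ℂ :=
    Matrix.of (fun i (m : Fin ℓ) =>
      ((ℓ - 1).choose (m : ℕ) : ℂ) * (α i ^ (ℓ - 1 - (m : ℕ)) * β i ^ (m : ℕ))) with hA
  set V : Matrix (Fin ℓ) (Fin k) ℂ := Matrix.of (fun (m : Fin ℓ) j => r j ^ (m : ℕ)) with hV
  have hBV : (Matrix.of fun i j : Fin k => (α i + r j * β i) ^ (ℓ - 1)) = A * V := by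
    ext i j
    rw [Matrix.mul_apply]
    have hexp : (α i + r j * β i) ^ (ℓ - 1)
        = ∑ m ∈ Finset.range ℓ, (r j * β i) ^ m * α i ^ (ℓ - 1 - m) * ((ℓ-1).choose m : ℂ) := by
      rw [add_comm, add_pow, Nat.sub_add_cancel hℓ]
    rw [Matrix.of_apply, hexp, ← Fin.sum_univ_eq_sum_range
      (fun m => (r j * β i) ^ m * α i ^ (ℓ - 1 - m) * ((ℓ-1).choose m : ℂ)) ℓ]
    refine Finset.sum_congr rfl fun m _ => ?_
    simp only [hA, hV, Matrix.of_apply]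
    rw [mul_pow]
    ring
  rw [hBV, cauchyBinet A V, Finset.mul_sum]
  refine Finset.sum_congr rfl fun μ hμ => ?_
  simp only [Finset.mem_filter, Finset.mem_univ, true_and] at hμ
  -- V-side
  have hVdet : (V.submatrix μ id).det = genVandermonde k (fun j => (μ j : ℕ)) r := by
    rw [← Matrix.det_transpose]
    rfl
  -- A-side
  have hAdet : (A.submatrix id μ).det
      = (∏ j : Fin k, ((ℓ - 1).choose (μ j : ℕ) : ℂ)) * ((∏ i : Fin k, β i ^ (ℓ - 1)) *
          ((-1 : ℂ) ^ (k * (k - 1) / 2) *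
            genVandermonde k (fun j => ℓ - 1 - (μ j.rev : ℕ)) (fun i => (β i / α i)⁻¹))) := by
    have h1 : A.submatrix id μ = Matrix.of (fun i j : Fin k =>
        ((ℓ - 1).choose (μ j : ℕ) : ℂ) *
          (Matrix.of (fun i j : Fin k => α i ^ (ℓ - 1 - (μ j : ℕ)) * β i ^ (μ j : ℕ))) i j) := rfl
    rw [h1, Matrix.det_mul_row]
    congr 1
    have h2 : (Matrix.of (fun i j : Fin k => α i ^ (ℓ - 1 - (μ j : ℕ)) * β i ^ (μ j : ℕ)))
        = Matrix.of (fun i j : Fin k => β i ^ (ℓ - 1) *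
            (Matrix.of (fun i j : Fin k => ((β i / α i)⁻¹) ^ (ℓ - 1 - (μ j : ℕ)))) i j) := by
      ext i j
      have hμj : (μ j : ℕ) ≤ ℓ - 1 := by have := (μ j).isLt; omega
      have ha : ℓ - 1 - (ℓ - 1 - (μ j : ℕ)) = (μ j : ℕ) := by omega
      simp only [Matrix.of_apply]
      have hb : (β i) ^ (ℓ - 1 - (μ j : ℕ)) ≠ 0 := pow_ne_zero _ (hβ i)
      have hpow : β i ^ (μ j : ℕ) * β i ^ (ℓ - 1 - (μ j : ℕ)) = β i ^ (ℓ - 1) := by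
        rw [← pow_add]; congr 1; omega
      rw [inv_div, div_pow, ← mul_div_assoc, eq_div_iff hb, mul_assoc, hpow]
      exact mul_comm _ _
    rw [h2, Matrix.det_mul_column]
    congr 1
    have h3 : (Matrix.of (fun i j : Fin k => ((β i / α i)⁻¹) ^ (ℓ - 1 - (μ j : ℕ))))
        = (Matrix.of (fun i j : Fin k =>
            ((fun i => (β i / α i)⁻¹) i) ^ (ℓ - 1 - (μ j.rev : ℕ)))).submatrix id ⇑Fin.revPerm := by
      ext i j
      simp [Fin.rev_rev]
    rw [h3, Matrix.det_permute', sign_revPerm k]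
    rw [genVandermonde]
    push_cast
    ring
  rw [hVdet, hAdet]
  ring
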